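/- Let K be a field and A = K⟨x,y⟩/(xyx - yxy, x² + x, y² + y) (the 0-Hecke algebra of the symmetric group S₃). Then A is a 6-dimensional algebra, A is isomorphic to its opposite algebra A^op, but A is not a symmetric algebra. -/

import Mathlib

/-- A (possibly non-unital) finite-dimensional `K`-algebra is *symmetric* if it admits a
nondegenerate associative symmetric bilinear form into `K`. -/
def IsSymmAlg (K A : Type*) [Field K] [NonUnitalNonAssocRing A] [Module K A] : Prop :=
  ∃ f : A →ₗ[K] A →ₗ[K] K,
    (∀ a b c : A, f (a * b) c = f a (b * c)) ∧
    (∀ a b : A, f a b = f b a) ∧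
    (∀ a : A, (∀ b : A, f a b = 0) → a = 0)

/-- The defining relations of the 0-Hecke algebra of `S₃`:
`K⟨x,y⟩/(xyx - yxy, x² + x, y² + y)`. -/
inductive rel16 (K : Type*) [Field K] :
    FreeAlgebra K (Fin 2) → FreeAlgebra K (Fin 2) → Prop
  | braid : rel16 K
      (FreeAlgebra.ι K 0 * FreeAlgebra.ι K 1 * FreeAlgebra.ι K 0)
      (FreeAlgebra.ι K 1 * FreeAlgebra.ι K 0 * FreeAlgebra.ι K 1)
  | xx : rel16 K (FreeAlgebra.ι K 0 * FreeAlgebra.ι K 0) (-(FreeAlgebra.ι K 0))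
  | yy : rel16 K (FreeAlgebra.ι K 1 * FreeAlgebra.ι K 1) (-(FreeAlgebra.ι K 1))

namespace Hecke16

open Matrix MulOpposite

noncomputable section

variable (K : Type*) [Field K]

/-! ### The matrix model: the left regular representation -/

abbrev E (i j : Fin 6) : Matrix (Fin 6) (Fin 6) K := Matrix.single i j 1

def MX : Matrix (Fin 6) (Fin 6) K :=
  E K 1 0 - E K 1 1 + E K 3 2 - E K 3 3 + E K 5 4 - E K 5 5
def MY : Matrix (Fin 6) (Fin 6) K :=
  E K 2 0 - E K 2 2 + E K 4 1 - E K 4 4 + E K 5 3 - E K 5 5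

theorem hXX : MX K * MX K = -(MX K) := by
  simp only [MX, E, mul_sub, sub_mul, mul_add, add_mul,
    Matrix.single_mul_single_same, Matrix.single_mul_single_of_ne, ne_eq,
    Fin.reduceEq, not_false_eq_true, one_mul]
  abel

theorem hYY : MY K * MY K = -(MY K) := by
  simp only [MY, E, mul_sub, sub_mul, mul_add, add_mul,
    Matrix.single_mul_single_same, Matrix.single_mul_single_of_ne, ne_eq,
    Fin.reduceEq, not_false_eq_true, one_mul]
  abel

theorem hXY : MX K * MY K =
    E K 3 0 - E K 3 2 + E K 5 1 - E K 5 3 - E K 5 4 + E K 5 5 := by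
  simp only [MX, MY, E, mul_sub, sub_mul, mul_add, add_mul,
    Matrix.single_mul_single_same, Matrix.single_mul_single_of_ne, ne_eq,
    Fin.reduceEq, not_false_eq_true, one_mul]
  abel

theorem hYX : MY K * MX K =
    E K 4 0 - E K 4 1 + E K 5 2 - E K 5 3 - E K 5 4 + E K 5 5 := by
  simp only [MX, MY, E, mul_sub, sub_mul, mul_add, add_mul,
    Matrix.single_mul_single_same, Matrix.single_mul_single_of_ne, ne_eq,
    Fin.reduceEq, not_false_eq_true, one_mul]
  abel

theorem hXYX : (MX K * MY K) * MX K =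
    E K 5 0 - E K 5 1 - E K 5 2 + E K 5 3 + E K 5 4 - E K 5 5 := by
  rw [hXY]
  simp only [MX, E, mul_sub, sub_mul, mul_add, add_mul,
    Matrix.single_mul_single_same, Matrix.single_mul_single_of_ne, ne_eq,
    Fin.reduceEq, not_false_eq_true, one_mul]
  abel

theorem hYXY : (MY K * MX K) * MY K =
    E K 5 0 - E K 5 1 - E K 5 2 + E K 5 3 + E K 5 4 - E K 5 5 := by
  rw [hYX]
  simp only [MY, E, mul_sub, sub_mul, mul_add, add_mul,
    Matrix.single_mul_single_same, Matrix.single_mul_single_of_ne, ne_eq,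
    Fin.reduceEq, not_false_eq_true, one_mul]
  abel

theorem hBraid : MX K * MY K * MX K = MY K * MX K * MY K := by
  rw [hXYX, hYXY]

/-! ### The algebra side -/

abbrev A := RingQuot (rel16 K)

def ax : A K := RingQuot.mkAlgHom K (rel16 K) (FreeAlgebra.ι K 0)
def ay : A K := RingQuot.mkAlgHom K (rel16 K) (FreeAlgebra.ι K 1)

theorem hxx : ax K * ax K = -ax K := by
  simpa [ax, _root_.map_mul, _root_.map_neg] using RingQuot.mkAlgHom_rel K (rel16.xx (K := K))

theorem hyy : ay K * ay K = -ay K := by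
  simpa [ay, _root_.map_mul, _root_.map_neg] using RingQuot.mkAlgHom_rel K (rel16.yy (K := K))

theorem hbraid : ax K * ay K * ax K = ay K * ax K * ay K := by
  simpa [ax, ay, _root_.map_mul] using RingQuot.mkAlgHom_rel K (rel16.braid (K := K))

theorem mulnegA (p q : A K) : p * -q = -(p * q) := mul_neg p q

theorem negmulA (p q : A K) : -p * q = -(p * q) := neg_mul p q

theorem hyx_x : (ay K * ax K) * ax K = -(ay K * ax K) := by
  rw [mul_assoc, hxx, mulnegA]

theorem hxy_y : (ax K * ay K) * ay K = -(ax K * ay K) := by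
  rw [mul_assoc, hyy, mulnegA]

theorem hxyx_x : (ax K * ay K * ax K) * ax K = -(ax K * ay K * ax K) := by
  rw [mul_assoc (ax K * ay K), hxx, mulnegA]

theorem hxyx_y : (ax K * ay K * ax K) * ay K = -(ax K * ay K * ax K) := by
  rw [hbraid, mul_assoc (ay K * ax K), hyy, mulnegA]

theorem hyx_y : (ay K * ax K) * ay K = ax K * ay K * ax K := (hbraid K).symm

/-- `A` is generated, as a `K`-algebra, by `x` and `y`. -/
theorem mem_adjoin (b : A K) : b ∈ Algebra.adjoin K {ax K, ay K} := by
  obtain ⟨w, rfl⟩ := RingQuot.mkAlgHom_surjective K (rel16 K) b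
  induction w using FreeAlgebra.induction with
  | grade0 r =>
    rw [AlgHom.commutes]
    exact Subalgebra.algebraMap_mem _ r
  | grade1 i =>
    fin_cases i
    · exact Algebra.subset_adjoin (Set.mem_insert _ _)
    · exact Algebra.subset_adjoin (Set.mem_insert_of_mem _ rfl)
  | add p q hp hq => rw [_root_.map_add]; exact add_mem hp hq
  | mul p q hp hq => rw [_root_.map_mul]; exact mul_mem hp hq

/-- The spanning family `1, x, y, xy, yx, xyx`. -/
def u : Fin 6 → A K :=
  ![1, ax K, ay K, ax K * ay K, ay K * ax K, ax K * ay K * ax K]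

theorem u_mem (i : Fin 6) : u K i ∈ Submodule.span K (Set.range (u K)) :=
  Submodule.subset_span ⟨i, rfl⟩

theorem span_u_eq_top : Submodule.span K (Set.range (u K)) = ⊤ := by
  set P := Submodule.span K (Set.range (u K)) with hP
  have hmulx : ∀ p ∈ P, p * ax K ∈ P := by
    intro p hp
    induction hp using Submodule.span_induction with
    | mem z hz =>
      obtain ⟨i, rfl⟩ := hz
      fin_cases i
      · show (1 : A K) * ax K ∈ P
        rw [one_mul]; exact u_mem K 1
      · show ax K * ax K ∈ P
        rw [hxx]; exact neg_mem (u_mem K 1)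
      · show ay K * ax K ∈ P
        exact u_mem K 4
      · show (ax K * ay K) * ax K ∈ P
        exact u_mem K 5
      · show (ay K * ax K) * ax K ∈ P
        rw [hyx_x]; exact neg_mem (u_mem K 4)
      · show (ax K * ay K * ax K) * ax K ∈ P
        rw [hxyx_x]; exact neg_mem (u_mem K 5)
    | zero => rw [zero_mul]; exact zero_mem P
    | add p q _ _ hp hq => rw [add_mul]; exact add_mem hp hq
    | smul c p _ hp => rw [smul_mul_assoc]; exact Submodule.smul_mem _ _ hp
  have hmuly : ∀ p ∈ P, p * ay K ∈ P := by
    intro p hp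
    induction hp using Submodule.span_induction with
    | mem z hz =>
      obtain ⟨i, rfl⟩ := hz
      fin_cases i
      · show (1 : A K) * ay K ∈ P
        rw [one_mul]; exact u_mem K 2
      · show ax K * ay K ∈ P
        exact u_mem K 3
      · show ay K * ay K ∈ P
        rw [hyy]; exact neg_mem (u_mem K 2)
      · show (ax K * ay K) * ay K ∈ P
        rw [hxy_y]; exact neg_mem (u_mem K 3)
      · show (ay K * ax K) * ay K ∈ P
        rw [hyx_y]; exact u_mem K 5
      · show (ax K * ay K * ax K) * ay K ∈ P
        rw [hxyx_y]; exact neg_mem (u_mem K 5)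
    | zero => rw [zero_mul]; exact zero_mem P
    | add p q _ _ hp hq => rw [add_mul]; exact add_mem hp hq
    | smul c p _ hp => rw [smul_mul_assoc]; exact Submodule.smul_mem _ _ hp
  have key : ∀ b : A K, ∀ p ∈ P, p * b ∈ P := by
    intro b
    induction mem_adjoin K b using Algebra.adjoin_induction with
    | mem z hz =>
      rcases hz with rfl | hz
      · exact hmulx
      · rcases hz with rfl
        exact hmuly
    | algebraMap r =>
      intro p hp
      rw [Algebra.algebraMap_eq_smul_one, mul_smul_comm, mul_one]
      exact Submodule.smul_mem _ _ hp
    | add b c _ _ hb hc =>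
      intro p hp
      rw [mul_add]
      exact add_mem (hb p hp) (hc p hp)
    | mul b c _ _ hb hc =>
      intro p hp
      rw [← mul_assoc]
      exact hc _ (hb p hp)
  rw [eq_top_iff]
  intro b _
  simpa using key b 1 (u_mem K 0)

instance : Module.Finite K (A K) :=
  ⟨⟨(Set.finite_range (u K)).toFinset, by
    rw [Set.Finite.coe_toFinset]
    exact span_u_eq_top K⟩⟩

theorem finrank_le : Module.finrank K (A K) ≤ 6 := by
  simpa using finrank_le_of_span_eq_top (span_u_eq_top K)

/-! ### The representation -/

def phi : A K →ₐ[K] Matrix (Fin 6) (Fin 6) K :=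
  RingQuot.liftAlgHom K
    ⟨FreeAlgebra.lift K ![MX K, MY K], by
      intro p q h
      induction h with
      | braid => simp [FreeAlgebra.lift_ι_apply, hBraid]
      | xx => simp [FreeAlgebra.lift_ι_apply, hXX]
      | yy => simp [FreeAlgebra.lift_ι_apply, hYY]⟩

theorem phi_x : phi K (ax K) = MX K := by
  simp [phi, ax, RingQuot.liftAlgHom_mkAlgHom_apply, FreeAlgebra.lift_ι_apply]

theorem phi_y : phi K (ay K) = MY K := by
  simp [phi, ay, RingQuot.liftAlgHom_mkAlgHom_apply, FreeAlgebra.lift_ι_apply]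

def v : Fin 6 → Matrix (Fin 6) (Fin 6) K
  | 0 => 1
  | 1 => MX K
  | 2 => MY K
  | 3 => MX K * MY K
  | 4 => MY K * MX K
  | 5 => MX K * MY K * MX K

theorem v_li : LinearIndependent K (v K) := by
  rw [Fintype.linearIndependent_iff]
  intro c hc
  rw [Fin.sum_univ_six, show v K 0 = 1 from rfl, show v K 1 = MX K from rfl,
    show v K 2 = MY K from rfl, show v K 3 = MX K * MY K from rfl,
    show v K 4 = MY K * MX K from rfl,
    show v K 5 = MX K * MY K * MX K from rfl, hXYX, hXY, hYX] at hc
  intro i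
  fin_cases i
  · simpa [MX, MY, E, Matrix.add_apply, Matrix.sub_apply, Matrix.smul_apply,
      Matrix.one_apply, Matrix.single_apply_same,
      Matrix.single_apply_of_ne, Fin.reduceEq]
      using congrFun (congrFun hc 0) 0
  · simpa [MX, MY, E, Matrix.add_apply, Matrix.sub_apply, Matrix.smul_apply,
      Matrix.one_apply, Matrix.single_apply_same,
      Matrix.single_apply_of_ne, Fin.reduceEq]
      using congrFun (congrFun hc 1) 0
  · simpa [MX, MY, E, Matrix.add_apply, Matrix.sub_apply, Matrix.smul_apply,
      Matrix.one_apply, Matrix.single_apply_same,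
      Matrix.single_apply_of_ne, Fin.reduceEq]
      using congrFun (congrFun hc 2) 0
  · simpa [MX, MY, E, Matrix.add_apply, Matrix.sub_apply, Matrix.smul_apply,
      Matrix.one_apply, Matrix.single_apply_same,
      Matrix.single_apply_of_ne, Fin.reduceEq]
      using congrFun (congrFun hc 3) 0
  · simpa [MX, MY, E, Matrix.add_apply, Matrix.sub_apply, Matrix.smul_apply,
      Matrix.one_apply, Matrix.single_apply_same,
      Matrix.single_apply_of_ne, Fin.reduceEq]
      using congrFun (congrFun hc 4) 0
  · simpa [MX, MY, E, Matrix.add_apply, Matrix.sub_apply, Matrix.smul_apply,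
      Matrix.one_apply, Matrix.single_apply_same,
      Matrix.single_apply_of_ne, Fin.reduceEq]
      using congrFun (congrFun hc 5) 0

theorem six_le_finrank : 6 ≤ Module.finrank K (A K) := by
  have hle : Submodule.span K (Set.range (v K)) ≤
      LinearMap.range (phi K).toLinearMap := by
    rw [Submodule.span_le]
    rintro _ ⟨i, rfl⟩
    fin_cases i
    · exact ⟨1, by show phi K 1 = v K 0; rw [_root_.map_one]; rfl⟩
    · exact ⟨ax K, by show phi K (ax K) = v K 1; rw [phi_x]; rfl⟩
    · exact ⟨ay K, by show phi K (ay K) = v K 2; rw [phi_y]; rfl⟩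
    · exact ⟨ax K * ay K, by
        show phi K (ax K * ay K) = v K 3
        rw [_root_.map_mul, phi_x, phi_y]; rfl⟩
    · exact ⟨ay K * ax K, by
        show phi K (ay K * ax K) = v K 4
        rw [_root_.map_mul, phi_x, phi_y]; rfl⟩
    · exact ⟨ax K * ay K * ax K, by
        show phi K (ax K * ay K * ax K) = v K 5
        rw [_root_.map_mul, _root_.map_mul, phi_x, phi_y]; rfl⟩
  calc (6 : ℕ) = Module.finrank K (Submodule.span K (Set.range (v K))) := by
        rw [finrank_span_eq_card (v_li K)]; simp
    _ ≤ Module.finrank K (LinearMap.range (phi K).toLinearMap) :=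
        Submodule.finrank_mono hle
    _ ≤ Module.finrank K (A K) := (phi K).toLinearMap.finrank_range_le

theorem finrank_eq : Module.finrank K (A K) = 6 :=
  le_antisymm (finrank_le K) (six_le_finrank K)

/-! ### The antiautomorphism -/

def Fop : A K →ₐ[K] (A K)ᵐᵒᵖ :=
  RingQuot.liftAlgHom K
    ⟨FreeAlgebra.lift K ![op (ax K), op (ay K)], by
      intro p q h
      induction h with
      | braid =>
        simp only [_root_.map_mul, FreeAlgebra.lift_ι_apply, Matrix.cons_val_zero,
          Matrix.cons_val_one, Matrix.head_cons, ← op_mul]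
        rw [op_inj]
        rw [← mul_assoc, ← mul_assoc, hbraid]
      | xx =>
        simp only [_root_.map_mul, _root_.map_neg, FreeAlgebra.lift_ι_apply, Matrix.cons_val_zero,
          ← op_mul, ← op_neg]
        rw [op_inj, hxx]
      | yy =>
        simp only [_root_.map_mul, _root_.map_neg, FreeAlgebra.lift_ι_apply, Matrix.cons_val_one,
          Matrix.head_cons, Matrix.cons_val_zero, ← op_mul, ← op_neg]
        rw [op_inj, hyy]⟩

theorem Fop_x : Fop K (ax K) = op (ax K) := by
  simp [Fop, ax, RingQuot.liftAlgHom_mkAlgHom_apply, FreeAlgebra.lift_ι_apply]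

theorem Fop_y : Fop K (ay K) = op (ay K) := by
  simp [Fop, ay, RingQuot.liftAlgHom_mkAlgHom_apply, FreeAlgebra.lift_ι_apply]

theorem Fop_injective : Function.Injective (Fop K) := by
  set G : (A K)ᵐᵒᵖ →ₐ[K] A K := AlgHom.opComm (Fop K)
  have hcomp : G.comp (Fop K) = AlgHom.id K (A K) := by
    apply RingQuot.ringQuot_ext'
    apply FreeAlgebra.hom_ext
    funext i
    fin_cases i
    · show G (Fop K (ax K)) = ax K
      rw [Fop_x]
      simp [G, AlgHom.opComm, Fop_x]
    · show G (Fop K (ay K)) = ay K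
      rw [Fop_y]
      simp [G, AlgHom.opComm, Fop_y]
  intro p q hpq
  have := congrArg G hpq
  calc p = G.comp (Fop K) p := by rw [hcomp]; rfl
    _ = G.comp (Fop K) q := this
    _ = q := by rw [hcomp]; rfl

instance : Module.Finite K (A K)ᵐᵒᵖ :=
  Module.Finite.equiv (MulOpposite.opLinearEquiv K (M := A K))

theorem op_iso : Nonempty (A K ≃ₐ[K] (A K)ᵐᵒᵖ) := by
  have hdim : Module.finrank K (A K) = Module.finrank K (A K)ᵐᵒᵖ :=
    (MulOpposite.opLinearEquiv K (M := A K)).finrank_eq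
  have hsurj : Function.Surjective (Fop K) :=
    (LinearMap.injective_iff_surjective_of_finrank_eq_finrank
      (f := (Fop K).toLinearMap) hdim).mp (Fop_injective K)
  exact ⟨AlgEquiv.ofBijective (Fop K) ⟨Fop_injective K, hsurj⟩⟩

/-! ### Not symmetric -/

theorem not_symm : ¬ IsSymmAlg K (A K) := by
  rintro ⟨f, hassoc, hsymm, hnd⟩
  set a : A K := ax K * ay K + ax K * ay K * ax K with ha
  -- `a ≠ 0` via the representation
  have hane : a ≠ 0 := by
    intro h0
    have := congrArg (phi K) h0
    rw [ha, _root_.map_add, _root_.map_mul, _root_.map_mul, _root_.map_mul, phi_x, phi_y, _root_.map_zero] at this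
    have h30 := congrFun (congrFun this 3) 0
    rw [hXYX K, hXY K] at h30
    simp [E, Matrix.add_apply, Matrix.sub_apply, Matrix.zero_apply,
      Matrix.single_apply_same, Matrix.single_apply_of_ne,
      Fin.reduceEq] at h30
  -- `a * b` is always a scalar multiple of `a`
  have key : ∀ b : A K, ∃ c : K, a * b = c • a := by
    intro b
    induction mem_adjoin K b using Algebra.adjoin_induction with
    | mem z hz =>
      rcases hz with rfl | hz
      · refine ⟨0, ?_⟩
        rw [ha, add_mul, hxyx_x, zero_smul]
        abel
      · rcases hz with rfl
        refine ⟨-1, ?_⟩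
        rw [ha, add_mul, hxy_y, hxyx_y]
        module
    | algebraMap r =>
      exact ⟨r, by rw [Algebra.algebraMap_eq_smul_one, mul_smul_comm, mul_one]⟩
    | add b c hb hc ihb ihc =>
      obtain ⟨cb, hcb⟩ := ihb
      obtain ⟨cc, hcc⟩ := ihc
      exact ⟨cb + cc, by rw [mul_add, hcb, hcc, add_smul]⟩
    | mul b c hb hc ihb ihc =>
      obtain ⟨cb, hcb⟩ := ihb
      obtain ⟨cc, hcc⟩ := ihc
      exact ⟨cb * cc, by
        rw [← mul_assoc, hcb, smul_mul_assoc, hcc, smul_smul]⟩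
  -- the "trace" `f · 1` vanishes on `a`
  have trace : ∀ p q : A K, f (p * q) 1 = f (q * p) 1 := by
    intro p q
    calc f (p * q) 1 = f p q := by rw [hassoc, mul_one]
      _ = f q p := hsymm p q
      _ = f (q * p) 1 := by rw [hassoc, mul_one]
  have hfa1 : f a 1 = 0 := by
    have h1 : f (ax K * ay K * ax K) 1 = -f (ax K * ay K) 1 := by
      rw [trace, ← mul_assoc, hxx, negmulA, _root_.map_neg, LinearMap.neg_apply]
    rw [ha, _root_.map_add, LinearMap.add_apply, h1]
    ring
  -- conclude `a = 0`, contradiction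
  refine hane (hnd a fun b => ?_)
  obtain ⟨c, hc⟩ := key b
  have : f a b = f (a * b) 1 := by rw [hassoc, mul_one]
  rw [this, hc, _root_.map_smul, LinearMap.smul_apply, hfa1, smul_zero]

end

end Hecke16

/-- The 0-Hecke algebra `A = K⟨x,y⟩/(xyx - yxy, x² + x, y² + y)` of `S₃` is
6-dimensional, isomorphic to its opposite algebra, but not a symmetric algebra. -/
theorem stmt16 (K : Type*) [Field K] :
    Module.finrank K (RingQuot (rel16 K)) = 6 ∧
    Nonempty (RingQuot (rel16 K) ≃ₐ[K] (RingQuot (rel16 K))ᵐᵒᵖ) ∧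
    ¬ IsSymmAlg K (RingQuot (rel16 K)) := by
  exact ⟨Hecke16.finrank_eq K, Hecke16.op_iso K, Hecke16.not_symm K⟩
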